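/- The Bass-Serre graph of an HNN extension Γ = HNN(H, Σ, θ) — with vertices Γ/H, positive edges Γ/Σ, source s(gΣ) = gH and range r(gΣ) = g t⁻¹H — is a tree, i.e. it is connected and contains no cycles. -/

import Mathlib

open HNNExtension HNNExtension.NormalWord

/-- The Bass-Serre graph of `Γ = HNN(H, Σ, θ)` on the vertex set `Γ/H`
(`H` embedded via `of`): two cosets are adjacent when they are the source `gH` and
the range `g t⁻¹ H` of some edge `gΣ`. -/
def bassSerreGraph {G : Type*} [Group G] (A B : Subgroup G) (φ : A ≃* B) :
    SimpleGraph (HNNExtension G A B φ ⧸ (of : G →* HNNExtension G A B φ).range) where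
  Adj u v := u ≠ v ∧ ∃ g : HNNExtension G A B φ,
    (u = QuotientGroup.mk g ∧ v = QuotientGroup.mk (g * t⁻¹)) ∨
    (v = QuotientGroup.mk g ∧ u = QuotientGroup.mk (g * t⁻¹))
  symm := by constructor; rintro u v ⟨hne, g, hg⟩; exact ⟨hne.symm, g, hg.symm⟩
  loopless := by constructor; rintro v ⟨hne, _⟩; exact hne rfl

namespace BassSerreAux

variable {G : Type*} [Group G] {A B : Subgroup G} {φ : A ≃* B}

local notation "Γ" => HNNExtension G A B φ
local notation "V" => (HNNExtension G A B φ ⧸ MonoidHom.range (of : G →* HNNExtension G A B φ))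

lemma mk_mul_of (γ : Γ) (g : G) : (QuotientGroup.mk (γ * of g) : V) = QuotientGroup.mk γ := by
  rw [QuotientGroup.eq]
  exact ⟨g⁻¹, by simp [mul_assoc]⟩

lemma t_zpow_not_mem (ε : ℤˣ) : (t ^ (ε : ℤ) : Γ) ∉ MonoidHom.range (of : G →* Γ) := by
  intro h
  have hw : (⟨1, [(ε, 1)], List.isChain_singleton _⟩ : ReducedWord G A B).prod φ =
      (t ^ (ε : ℤ) : Γ) := by
    simp [ReducedWord.prod]
  have := HNNExtension.ReducedWord.toList_eq_nil_of_mem_of_range φ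
    (⟨1, [(ε, 1)], List.isChain_singleton _⟩ : ReducedWord G A B) (by rw [hw]; exact h)
  simp at this

lemma adj_iff {u v : V} :
    (bassSerreGraph A B φ).Adj u v ↔ u ≠ v ∧ ∃ (g : Γ) (ε : ℤˣ),
      u = QuotientGroup.mk g ∧ v = QuotientGroup.mk (g * t ^ (ε : ℤ)) := by
  constructor
  · rintro ⟨hne, g, (⟨rfl, rfl⟩ | ⟨rfl, rfl⟩)⟩
    · exact ⟨hne, g, -1, rfl, by norm_num⟩
    · exact ⟨hne, g * t⁻¹, 1, rfl, by norm_num [mul_assoc]⟩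
  · rintro ⟨hne, g, ε, rfl, rfl⟩
    refine ⟨hne, ?_⟩
    rcases Int.units_eq_one_or ε with rfl | rfl
    · exact ⟨g * t, Or.inr ⟨by norm_num, by norm_num [mul_assoc]⟩⟩
    · exact ⟨g, Or.inl ⟨rfl, by norm_num⟩⟩

lemma adj_step (g : Γ) (ε : ℤˣ) :
    (bassSerreGraph A B φ).Adj (QuotientGroup.mk g) (QuotientGroup.mk (g * t ^ (ε : ℤ))) := by
  refine adj_iff.2 ⟨?_, g, ε, rfl, rfl⟩
  intro h
  rw [QuotientGroup.eq] at h
  exact t_zpow_not_mem ε (by simpa using h)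

/-- Left translation as a graph homomorphism of the Bass-Serre graph. -/
def shift (x : Γ) : bassSerreGraph A B φ →g bassSerreGraph A B φ where
  toFun := Quotient.map' (x * ·) (by
    intro a b h
    rw [QuotientGroup.leftRel_apply] at h ⊢
    simpa [mul_assoc] using h)
  map_rel' := by
    intro a b hab
    obtain ⟨-, g, ε, rfl, rfl⟩ := adj_iff.1 hab
    show (bassSerreGraph A B φ).Adj (QuotientGroup.mk (x * g))
      (QuotientGroup.mk (x * (g * t ^ (ε : ℤ))))
    rw [← mul_assoc]
    exact adj_step _ _

lemma shift_mk (x g : Γ) :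
    shift x (QuotientGroup.mk g : V) = QuotientGroup.mk (x * g) := rfl

lemma reachable_one (γ : Γ) :
    (bassSerreGraph A B φ).Reachable (QuotientGroup.mk 1) (QuotientGroup.mk γ) := by
  induction γ using induction_on with
  | of g =>
    rw [show (QuotientGroup.mk (of g) : V) = QuotientGroup.mk 1 by
      simpa using mk_mul_of (1 : Γ) g]
  | t =>
    have h := adj_step (1 : Γ) 1
    simp only [Units.val_one, zpow_one, one_mul] at h
    exact h.reachable
  | mul x y hx hy =>
    refine hx.trans ?_
    have := hy.map (shift x)
    rwa [shift_mk, shift_mk, mul_one] at this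
  | inv x hx =>
    have := hx.map (shift x⁻¹)
    rw [shift_mk, shift_mk, mul_one, inv_mul_cancel] at this
    exact this.symm

lemma connected : (bassSerreGraph A B φ).Connected := by
  rw [SimpleGraph.connected_iff]
  refine ⟨fun u v => ?_, ⟨QuotientGroup.mk 1⟩⟩
  obtain ⟨a, rfl⟩ := QuotientGroup.mk_surjective u
  obtain ⟨b, rfl⟩ := QuotientGroup.mk_surjective v
  exact (reachable_one a).symm.trans (reachable_one b)

end BassSerreAux

namespace BassSerreAux

variable {G : Type*} [Group G] {A B : Subgroup G} {φ : A ≃* B}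

local notation "Γ" => HNNExtension G A B φ
local notation "V" => (HNNExtension G A B φ ⧸ MonoidHom.range (of : G →* HNNExtension G A B φ))

lemma units_neg {ε u : ℤˣ} (h : u ≠ ε) : u = -ε := by
  rcases Int.units_eq_one_or ε with rfl | rfl <;>
    rcases Int.units_eq_one_or u with rfl | rfl <;> simp_all

lemma pinch (ε u : ℤˣ) (hu : u = -ε) {g : G} (hg : g ∈ toSubgroup A B ε) :
    ∃ g' : G, t ^ (ε : ℤ) * of g * t ^ (u : ℤ) = (of g' : Γ) := by
  subst hu
  rcases Int.units_eq_one_or ε with rfl | rfl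
  · refine ⟨φ ⟨g, hg⟩, ?_⟩
    have := equiv_eq_conj (G := G) (A := A) (B := B) (φ := φ) ⟨g, hg⟩
    simp only [Units.val_one, zpow_one, Units.val_neg, zpow_neg, this]
  · refine ⟨φ.symm ⟨g, hg⟩, ?_⟩
    have := equiv_symm_eq_conj (G := G) (A := A) (B := B) (φ := φ) ⟨g, hg⟩
    simp only [Units.val_neg, Units.val_one, zpow_neg, zpow_one, neg_neg, this]

lemma pinch_mk (γ : Γ) (h₀ : G) (ε u : ℤˣ) (hu : u = -ε) {g : G}
    (hg : g ∈ toSubgroup A B ε) :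
    (QuotientGroup.mk (γ * of h₀ * t ^ (ε : ℤ) * of g * t ^ (u : ℤ)) : V) =
      QuotientGroup.mk γ := by
  obtain ⟨g', hg'⟩ := pinch ε u hu hg
  have h : γ * of h₀ * t ^ (ε : ℤ) * of g * t ^ (u : ℤ) = γ * of (h₀ * g') := by
    rw [map_mul]
    simp only [mul_assoc] at hg' ⊢
    rw [hg']
  rw [h, mk_mul_of]

lemma getVert_mem_support {u v : V} (p : (bassSerreGraph A B φ).Walk u v) (i : ℕ) :
    p.getVert i ∈ p.support := by
  induction p generalizing i with
  | nil => simp [SimpleGraph.Walk.getVert]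
  | cons h q ih =>
    cases i with
    | zero => simp [SimpleGraph.Walk.getVert_zero]
    | succ n =>
      rw [SimpleGraph.Walk.getVert_cons_succ, SimpleGraph.Walk.support_cons]
      exact List.mem_cons_of_mem _ (ih n)

/-- Every path starting at `γH` is encoded by a reduced word. -/
lemma exists_word {u v : V} (p : (bassSerreGraph A B φ).Walk u v) (hp : p.IsPath) :
    ∀ γ : Γ, u = QuotientGroup.mk γ →
    ∃ w : ReducedWord G A B, v = QuotientGroup.mk (γ * w.prod φ) ∧
      w.toList.length = p.length ∧
      ∀ x ∈ w.toList.head?,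
        p.getVert 1 = QuotientGroup.mk (γ * of w.head * t ^ ((x : ℤˣ × G).1 : ℤ)) := by
  induction p with
  | nil =>
    intro γ hγ
    subst hγ
    exact ⟨⟨1, [], List.isChain_nil⟩, by simp [ReducedWord.prod], by simp, by simp⟩
  | @cons u u' v h q ih =>
    intro γ hγ
    subst hγ
    rw [SimpleGraph.Walk.cons_isPath_iff] at hp
    obtain ⟨-, g, ε, hu, hu'⟩ := adj_iff.1 h
    obtain ⟨h₀, hh₀⟩ := QuotientGroup.eq.1 hu
    have hg : g = γ * of h₀ := by
      rw [hh₀, mul_inv_cancel_left]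
    have hu'' : u' = QuotientGroup.mk (γ * of h₀ * t ^ (ε : ℤ)) := by rw [hu', hg]
    obtain ⟨w', hv, hlen, hgv⟩ := ih hp.1 (γ * of h₀ * t ^ (ε : ℤ)) hu''
    have hchain : ((ε, w'.head) :: w'.toList).Chain'
        (fun a b => a.2 ∈ toSubgroup A B a.1 → a.1 = b.1) := by
      refine List.isChain_cons.2 ?_
      refine ⟨?_, w'.chain⟩
      intro b hb hmem
      by_contra hne'
      have hb1 : b.1 = -ε := units_neg (fun hh => hne' hh.symm)
      have h2 : q.getVert 1 = (QuotientGroup.mk γ : V) := by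
        rw [hgv b hb]
        exact pinch_mk γ h₀ ε b.1 hb1 hmem
      exact hp.2 (h2 ▸ getVert_mem_support q 1)
    refine ⟨⟨h₀, (ε, w'.head) :: w'.toList, hchain⟩, ?_, by simpa using hlen, ?_⟩
    · rw [hv]
      congr 1
      simp only [ReducedWord.prod, List.map_cons, List.prod_cons]
      simp [mul_assoc]
    · intro x hx
      simp only [List.head?_cons, Option.mem_def, Option.some_inj] at hx
      subst hx
      rw [SimpleGraph.Walk.getVert_cons_succ, SimpleGraph.Walk.getVert_zero]
      exact hu''


lemma acyclic : (bassSerreGraph A B φ).IsAcyclic := by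
  intro v c hc
  obtain ⟨γ, hγ⟩ := QuotientGroup.mk_surjective v
  cases c with
  | nil => exact hc.ne_nil rfl
  | cons h q =>
    have hq2 : 2 ≤ q.length := by
      have h3 := hc.three_le_length
      rw [SimpleGraph.Walk.length_cons] at h3
      omega
    rw [SimpleGraph.Walk.cons_isCycle_iff] at hc
    obtain ⟨-, g, ε, hu, hu'⟩ := adj_iff.1 h
    obtain ⟨h₀, hh₀⟩ := QuotientGroup.eq.1 (hγ.trans hu)
    have hg : g = γ * of h₀ := by rw [hh₀, mul_inv_cancel_left]
    obtain ⟨w, hv, hlen, hgv⟩ := exists_word q hc.1 (γ * of h₀ * t ^ (ε : ℤ))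
      (hu'.trans (by rw [hg]))
    have hne1 : q.getVert 1 ≠ v := by
      cases q with
      | nil => simp at hq2
      | cons h₂ q₂ =>
        intro hEq
        rw [SimpleGraph.Walk.getVert_cons_succ, SimpleGraph.Walk.getVert_zero] at hEq
        subst hEq
        have h0 : q₂ = SimpleGraph.Walk.nil :=
          (SimpleGraph.Walk.isPath_iff_eq_nil (p := q₂)).1 hc.1.of_cons
        rw [h0] at hq2
        simp at hq2
    have hchain : ((ε, w.head) :: w.toList).Chain'
        (fun a b => a.2 ∈ toSubgroup A B a.1 → a.1 = b.1) := by
      refine List.isChain_cons.2 ?_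
      refine ⟨?_, w.chain⟩
      intro b hb hmem
      by_contra hne'
      have hb1 : b.1 = -ε := units_neg (fun hh => hne' hh.symm)
      have h2 : q.getVert 1 = (QuotientGroup.mk γ : V) := by
        rw [hgv b hb]
        exact pinch_mk γ h₀ ε b.1 hb1 hmem
      exact hne1 (h2.trans hγ)
    have hWp : (⟨h₀, (ε, w.head) :: w.toList, hchain⟩ : ReducedWord G A B).prod φ =
        of h₀ * t ^ (ε : ℤ) * w.prod φ := by
      simp only [ReducedWord.prod, List.map_cons, List.prod_cons]
      simp [mul_assoc]
    have hmemrange : (⟨h₀, (ε, w.head) :: w.toList, hchain⟩ : ReducedWord G A B).prod φ ∈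
        MonoidHom.range (of : G →* HNNExtension G A B φ) := by
      rw [hWp]
      have := QuotientGroup.eq.1 (hγ.trans hv)
      simpa [mul_assoc] using this
    have := HNNExtension.ReducedWord.toList_eq_nil_of_mem_of_range φ _ hmemrange
    simp at this

end BassSerreAux

/-- **The Bass-Serre graph of an HNN extension is a tree.**
The Bass-Serre graph of `Γ = HNN(H, Σ, θ)` — vertices `Γ/H`, positive edges `Γ/Σ`,
source `s(gΣ) = gH`, range `r(gΣ) = g t⁻¹ H` — is a tree: it is connected and has no
cycles (`SimpleGraph.IsTree`), and moreover distinct edges `gΣ ∈ Γ/Σ` have distinct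
pairs (source, range), so that the graph with its parallel edges is itself a tree. -/
theorem bassSerre_isTree {G : Type*} [Group G] (A B : Subgroup G) (φ : A ≃* B) :
    (bassSerreGraph A B φ).IsTree ∧
      ∀ γ γ' : HNNExtension G A B φ,
        (QuotientGroup.mk γ : HNNExtension G A B φ ⧸ (of : G →* HNNExtension G A B φ).range) =
            QuotientGroup.mk γ' →
        (QuotientGroup.mk (γ * t⁻¹) : HNNExtension G A B φ ⧸
            (of : G →* HNNExtension G A B φ).range) = QuotientGroup.mk (γ' * t⁻¹) →
        (QuotientGroup.mk γ : HNNExtension G A B φ ⧸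
            A.map (of : G →* HNNExtension G A B φ)) = QuotientGroup.mk γ' := by
  refine ⟨⟨BassSerreAux.connected, BassSerreAux.acyclic⟩, ?_⟩
  intro γ γ' h1 h2
  obtain ⟨h, hh⟩ := QuotientGroup.eq.1 h1
  have h2' := QuotientGroup.eq.1 h2
  have hA : h ∈ A := by
    by_contra hA
    have hchain : List.Chain' (fun a b => a.2 ∈ toSubgroup A B a.1 → a.1 = b.1)
        [((1:ℤˣ), h), ((-1:ℤˣ), (1:G))] := by
      refine List.isChain_cons_cons.2 ⟨?_, List.isChain_singleton _⟩
      intro hmem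
      exact absurd hmem hA
    have hcalc : (γ * t⁻¹)⁻¹ * (γ' * t⁻¹) = t * of h * t⁻¹ := by
      rw [hh]
      group
    have hprodeq : (⟨1, [((1:ℤˣ), h), ((-1:ℤˣ), (1:G))], hchain⟩ :
        ReducedWord G A B).prod φ = t * of h * t⁻¹ := by
      simp [ReducedWord.prod]
    have hmem : (⟨1, [((1:ℤˣ), h), ((-1:ℤˣ), (1:G))], hchain⟩ :
        ReducedWord G A B).prod φ ∈
        MonoidHom.range (of : G →* HNNExtension G A B φ) := by
      rw [hprodeq, ← hcalc]
      exact h2'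
    have := HNNExtension.ReducedWord.toList_eq_nil_of_mem_of_range φ _ hmem
    simp at this
  rw [QuotientGroup.eq]
  exact ⟨h, hA, hh⟩
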